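/- arXiv:1902.07670 — 2 statements merged into one kernel-verified Lean document; each statement's English description precedes it below -/
import Mathlib

section
/- Let H ∈ ℂ^{J×M} have rows in the column span of H_t ∈ ℂ^{M×L}, and let F = F₁ + F₂ be the orthogonal decomposition of F ∈ ℂ^{M×Q} into components with columns in the span of H_t and its orthogonal complement, respectively. Then for any γ > 0, det(I_J + γ H F F^H H^H) = det(I_J + γ H F₁ F₁^H H^H), and ‖F‖_F ≥ ‖F₁‖_F. -/
open Matrix

noncomputable def frobeniusNorm {m n : Type*} [Fintype m] [Fintype n]
    (A : Matrix m n ℂ) : ℝ :=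
  Real.sqrt (∑ i, ∑ j, ‖A i j‖ ^ 2)

/-- Rate invariance and norm reduction: with rows of H in the column span of H_t and the
orthogonal decomposition F = F₁ + F₂, det(I + γ H F Fᴴ Hᴴ) = det(I + γ H F₁ F₁ᴴ Hᴴ)
and ‖F‖_F ≥ ‖F₁‖_F. -/
theorem rate_invariance_norm_reduction {J M L Q : ℕ}
    (Ht : Matrix (Fin M) (Fin L) ℂ) (A : Matrix (Fin J) (Fin L) ℂ)
    (H : Matrix (Fin J) (Fin M) ℂ) (hH : H = A * Htᴴ)
    (F F₁ F₂ : Matrix (Fin M) (Fin Q) ℂ) (hF : F = F₁ + F₂)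
    (C : Matrix (Fin L) (Fin Q) ℂ) (hF₁ : F₁ = Ht * C)
    (hF₂ : Htᴴ * F₂ = 0)
    (γ : ℝ) (hγ : 0 < γ) :
    (1 + (γ : ℂ) • (H * F * Fᴴ * Hᴴ)).det = (1 + (γ : ℂ) • (H * F₁ * F₁ᴴ * Hᴴ)).det ∧
    frobeniusNorm F₁ ≤ frobeniusNorm F := by
  have hHF : H * F = H * F₁ := by
    rw [hF, Matrix.mul_add, hH, Matrix.mul_assoc, Matrix.mul_assoc, hF₂, Matrix.mul_zero,
      add_zero]
  constructor
  · have : H * F * Fᴴ * Hᴴ = H * F₁ * F₁ᴴ * Hᴴ := by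
      calc H * F * Fᴴ * Hᴴ = H * F * (H * F)ᴴ := by
            rw [Matrix.conjTranspose_mul, Matrix.mul_assoc]
        _ = H * F₁ * (H * F₁)ᴴ := by rw [hHF]
        _ = H * F₁ * F₁ᴴ * Hᴴ := by
            rw [Matrix.conjTranspose_mul]
            simp [Matrix.mul_assoc]
    rw [this]
  · -- orthogonality: F₁ᴴ * F₂ = 0
    have horth : F₁ᴴ * F₂ = 0 := by
      rw [hF₁, Matrix.conjTranspose_mul, Matrix.mul_assoc, hF₂, Matrix.mul_zero]
    unfold frobeniusNorm
    apply Real.sqrt_le_sqrt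
    have key : ∀ j, ∑ i, ‖F i j‖ ^ 2 = ∑ i, ‖F₁ i j‖ ^ 2 + ∑ i, ‖F₂ i j‖ ^ 2 := by
      intro j
      have h0 : (F₁ᴴ * F₂) j j = 0 := by rw [horth]; rfl
      have h0' : ∑ i, (starRingEnd ℂ) (F₁ i j) * F₂ i j = 0 := by
        simpa [Matrix.mul_apply, Matrix.conjTranspose_apply] using h0
      have hre : ∑ i, ((starRingEnd ℂ) (F₁ i j) * F₂ i j).re = 0 := by
        have := congrArg Complex.re h0'
        simpa [Complex.re_sum] using this
      have expand : ∀ i, ‖F i j‖ ^ 2 =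
          ‖F₁ i j‖ ^ 2 + ‖F₂ i j‖ ^ 2 + 2 * ((starRingEnd ℂ) (F₁ i j) * F₂ i j).re := by
        intro i
        have hFij : F i j = F₁ i j + F₂ i j := by rw [hF]; rfl
        have h1 : ∀ z : ℂ, ‖z‖ ^ 2 = Complex.normSq z := fun z => by
          rw [← Complex.sq_norm]
        rw [hFij, h1, h1, h1, Complex.normSq_add]
        have h2 : (F₁ i j * (starRingEnd ℂ) (F₂ i j)).re
            = ((starRingEnd ℂ) (F₁ i j) * F₂ i j).re := by
          rw [← Complex.conj_re ((starRingEnd ℂ) (F₁ i j) * F₂ i j)]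
          simp [mul_comm]
        rw [h2]
      rw [Finset.sum_congr rfl (fun i _ => expand i)]
      rw [Finset.sum_add_distrib, Finset.sum_add_distrib, ← Finset.mul_sum, hre]
      ring
    calc ∑ i, ∑ j, ‖F₁ i j‖ ^ 2 = ∑ j, ∑ i, ‖F₁ i j‖ ^ 2 := Finset.sum_comm
      _ ≤ ∑ j, ∑ i, ‖F i j‖ ^ 2 := by
          apply Finset.sum_le_sum
          intro j _
          rw [key j]
          have : (0:ℝ) ≤ ∑ i, ‖F₂ i j‖ ^ 2 :=
            Finset.sum_nonneg fun i _ => sq_nonneg _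
          linarith
      _ = ∑ i, ∑ j, ‖F i j‖ ^ 2 := Finset.sum_comm
end

section
/- For a diagonal matrix D ∈ ℂ^{M×M} with unit-modulus diagonal entries and any matrices T ∈ ℂ^{M×N}, B ∈ ℂ^{N×Q}, and full-rank channel factorization H = A H_t^H with A ∈ ℂ^{J×L}, the achievable rate R(F) = log₂ det(I_J + γ H F F^H H^H) is unchanged when F = D T B is replaced by its projection onto the column space of H_t. -/
open Matrix

/-- For F = D T B with D a unit-modulus diagonal phase-shift matrix and H = A H_tᴴ, the
achievable rate log₂ det(I + γ H F Fᴴ Hᴴ) is unchanged when F is replaced by its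
orthogonal projection F₁ = H_t (H_tᴴH_t)⁻¹ H_tᴴ F onto the column space of H_t. -/
theorem rate_unchanged_projection {J M N L Q : ℕ}
    (β : Fin M → ℝ)
    (D : Matrix (Fin M) (Fin M) ℂ)
    (hD : D = Matrix.diagonal (fun m => Complex.exp (Complex.I * (2 * Real.pi * β m))))
    (T : Matrix (Fin M) (Fin N) ℂ) (B : Matrix (Fin N) (Fin Q) ℂ)
    (Ht : Matrix (Fin M) (Fin L) ℂ) (A : Matrix (Fin J) (Fin L) ℂ)
    (hinv : IsUnit (Htᴴ * Ht))
    (H : Matrix (Fin J) (Fin M) ℂ) (hH : H = A * Htᴴ)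
    (γ : ℝ) (hγ : 0 < γ)
    (F F₁ : Matrix (Fin M) (Fin Q) ℂ) (hF : F = D * T * B)
    (hF₁ : F₁ = Ht * (Htᴴ * Ht)⁻¹ * Htᴴ * F) :
    Real.logb 2 ‖(1 + (γ : ℂ) • (H * F * Fᴴ * Hᴴ)).det‖
      = Real.logb 2 ‖(1 + (γ : ℂ) • (H * F₁ * F₁ᴴ * Hᴴ)).det‖ := by
  have key : H * F₁ = H * F := by
    have hdet : IsUnit (Htᴴ * Ht).det := (Matrix.isUnit_iff_isUnit_det _).mp hinv
    have h1 : (Htᴴ * Ht) * (Htᴴ * Ht)⁻¹ = 1 := Matrix.mul_nonsing_inv _ hdet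
    calc H * F₁ = A * ((Htᴴ * Ht) * (Htᴴ * Ht)⁻¹) * Htᴴ * F := by
          rw [hF₁, hH]; simp only [Matrix.mul_assoc]
      _ = H * F := by rw [h1, hH, Matrix.mul_one]
  have key2 : F₁ᴴ * Hᴴ = Fᴴ * Hᴴ := by
    rw [← Matrix.conjTranspose_mul, ← Matrix.conjTranspose_mul, key]
  rw [show H * F₁ * F₁ᴴ * Hᴴ = H * F₁ * (F₁ᴴ * Hᴴ) by rw [Matrix.mul_assoc], key, key2, Matrix.mul_assoc]
end
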